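/- The extended Cygan spheres of radius 2/√3 centered at the boundary points (0, 0) and (−2 − (2/√3)i, 0) of the Heisenberg group intersect in exactly one point: their intersection, as subsets of ℂ × ℝ × ℝ≥0, equals the single point (−1 − (√3/3)i, 0, 0). In particular the two spheres are tangent at this point. -/

import Mathlib

set_option maxHeartbeats 1000000

private lemma aux_le (x y : ℝ) (h : x ^ 2 + y ^ 2 = 16/9) (hx : 0 ≤ x) : x ≤ 4/3 := by
  nlinarith [sq_nonneg y]

/-- Center of the isometric sphere I₁⁻ in Heisenberg coordinates. -/
noncomputable def c₁ : ℂ := -2 - ((2 / Real.sqrt 3 : ℝ) : ℂ) * Complex.I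

theorem spheres_tangent_at_pAB :
    {p : ℂ × ℝ × ℝ | 0 ≤ p.2.2 ∧
        ‖((‖p.1‖ ^ 2 + p.2.2 : ℝ) : ℂ)
          - (p.2.1 : ℂ) * Complex.I‖ = 4/3 ∧
        ‖((‖p.1 - c₁‖ ^ 2 + p.2.2 : ℝ) : ℂ)
          - ((p.2.1 + 2 * (p.1 * (starRingEnd ℂ) c₁).im : ℝ) : ℂ) * Complex.I‖ = 4/3}
      = {((-1 : ℂ) - ((Real.sqrt 3 / 3 : ℝ) : ℂ) * Complex.I, (0 : ℝ), (0 : ℝ))} := by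
  have hs : Real.sqrt 3 ^ 2 = 3 := Real.sq_sqrt (by norm_num)
  have hs0 : (0:ℝ) < Real.sqrt 3 := Real.sqrt_pos.mpr (by norm_num)
  set c : ℝ := 1 / Real.sqrt 3 with hcdef
  have hc2 : c ^ 2 = 1/3 := by rw [hcdef, div_pow, hs]; norm_num
  have hc3 : c = Real.sqrt 3 / 3 := by
    field_simp [hcdef]
    rw [hcdef, div_mul_eq_mul_div, one_mul, div_eq_iff hs0.ne']; nlinarith [hs]
  have hcre : ((starRingEnd ℂ) c₁).re = -2 := by simp [c₁]
  have hcim : ((starRingEnd ℂ) c₁).im = 2 * c := by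
    simp [c₁, hcdef]; ring
  ext ⟨z, t, u⟩
  simp only [Set.mem_setOf_eq, Set.mem_singleton_iff, Prod.mk.injEq]
  have habs : ‖z‖ ^ 2 = z.re ^ 2 + z.im ^ 2 := by
    rw [Complex.sq_norm, Complex.normSq_apply]; ring
  have habs2 : ‖z - c₁‖ ^ 2 = (z.re + 2) ^ 2 + (z.im + 2 * c) ^ 2 := by
    rw [Complex.sq_norm, Complex.normSq_apply]
    simp [c₁, Complex.sub_re, Complex.sub_im, hcdef]
    ring
  constructor
  · rintro ⟨hu, h1, h2⟩
    have h1' : Complex.normSq (((‖z‖ ^ 2 + u : ℝ) : ℂ) - (t : ℂ) * Complex.I)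
        = 16/9 := by rw [← Complex.sq_norm, h1]; norm_num
    have h2' : Complex.normSq (((‖z - c₁‖ ^ 2 + u : ℝ) : ℂ)
        - ((t + 2 * (z * (starRingEnd ℂ) c₁).im : ℝ) : ℂ) * Complex.I) = 16/9 := by
      rw [← Complex.sq_norm, h2]; norm_num
    rw [Complex.normSq_apply] at h1' h2'
    simp only [Complex.sub_re, Complex.sub_im, Complex.ofReal_re, Complex.ofReal_im,
      Complex.mul_re, Complex.mul_im, Complex.I_re, Complex.I_im, mul_zero, mul_one,
      zero_mul, zero_sub, sub_zero, zero_add, sub_neg_eq_add, hcre, hcim, habs, habs2]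
      at h1' h2'
    set a := z.re with ha
    set b := z.im with hb
    have e1 : (a ^ 2 + b ^ 2 + u) ^ 2 + t ^ 2 = 16/9 := by linear_combination h1'
    have e2 : ((a + 2) ^ 2 + (b + 2*c) ^ 2 + u) ^ 2 + (t + 4*a*c - 4*b) ^ 2 = 16/9 := by
      linear_combination h2'
    clear h1' h2'
    have hn1 : (0:ℝ) ≤ a ^ 2 + b ^ 2 + u := by positivity
    have hn2 : (0:ℝ) ≤ (a + 2) ^ 2 + (b + 2*c) ^ 2 + u := by positivity
    have hx1 : a ^ 2 + b ^ 2 + u ≤ 4/3 := aux_le _ _ e1 hn1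
    have hx2 : (a + 2) ^ 2 + (b + 2*c) ^ 2 + u ≤ 4/3 := aux_le _ _ e2 hn2
    clear e2 hn1 hn2
    have h3 : 2*(a+1)^2 + 2*(b+c)^2 + 2*u ≤ 0 := by nlinarith [hc2]
    have hA0 : (a+1)^2 = 0 :=
      le_antisymm (by nlinarith [sq_nonneg (b+c)]) (sq_nonneg _)
    have hB0 : (b+c)^2 = 0 :=
      le_antisymm (by nlinarith [sq_nonneg (a+1)]) (sq_nonneg _)
    have hU : u = 0 :=
      le_antisymm (by nlinarith [sq_nonneg (a+1), sq_nonneg (b+c)]) hu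
    have hA : a = -1 := by
      have := sq_eq_zero_iff.mp hA0; linarith
    have hB : b = -c := by
      have := sq_eq_zero_iff.mp hB0; linarith
    have ht2 : t ^ 2 = 0 := by
      rw [hA, hB, hU] at e1; nlinarith [hc2]
    have ht0 : t = 0 := by
      have := sq_eq_zero_iff.mp ht2
      simpa using this
    refine ⟨?_, ht0, hU⟩
    apply Complex.ext
    · simp [← ha, hA]
    · simp [← hb, hB, hc3]
  · rintro ⟨hz, ht, hu⟩
    subst ht hu
    have hre : z.re = -1 := by rw [hz]; simp
    have him : z.im = -c := by rw [hz, hc3]; simp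
    have hA : ‖z‖ ^ 2 = 4/3 := by
      rw [habs, hre, him]; nlinarith [hc2]
    have hA2 : ‖z - c₁‖ ^ 2 = 4/3 := by
      rw [habs2, hre, him]; nlinarith [hc2]
    have hI : (z * (starRingEnd ℂ) c₁).im = 0 := by
      rw [Complex.mul_im, hcre, hcim, hre, him]; ring
    refine ⟨le_refl 0, ?_, ?_⟩
    · rw [hA]; simp
    · rw [hA2, hI]; simp
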